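/- Let t ≥ 1 and r be integers, and let c be a real number with 0 < c < 1. Suppose that for every positive integer n, (1/t)(1 − c)·p^L(n) < N(r,t;n) < (1/t)(1 + c)·p^U(n). Let x ≥ 2 be an integer such that for every integer a ≥ x, T_a(1) > log(4a√3 · t · (1+c)/(1−c)²) + log(S_a(1)). Then for all integers a, b ≥ x, N(r,t;a)·N(r,t;b) > N(r,t;a+b). -/

import Mathlib

open Finset

/-- The Dyson rank of a partition: largest part minus number of parts. -/
def Nat.Partition.rank {n : ℕ} (lam : Nat.Partition n) : ℤ :=
  (lam.parts.sup : ℤ) - (Multiset.card lam.parts : ℤ)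

/-- `rankCount r t n` is `N(r,t;n)`, the number of partitions of `n` whose rank is
congruent to `r` modulo `t`. -/
def rankCount (r t : ℤ) (n : ℕ) : ℕ :=
  (Finset.univ.filter (fun lam : Nat.Partition n => lam.rank % t = r % t)).card

/-- Lehmer-type lower bound `p^L(n) = (√3/(12n))(1 - 1/√n) e^{(π/6)√(24n-1)}`. -/
noncomputable def pLow (n : ℕ) : ℝ :=
  Real.sqrt 3 / (12 * n) * (1 - 1 / Real.sqrt n) *
    Real.exp (Real.pi / 6 * Real.sqrt (24 * n - 1))

/-- Lehmer-type upper bound `p^U(n) = (√3/(12n))(1 + 1/√n) e^{(π/6)√(24n-1)}`. -/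
noncomputable def pUp (n : ℕ) : ℝ :=
  Real.sqrt 3 / (12 * n) * (1 + 1 / Real.sqrt n) *
    Real.exp (Real.pi / 6 * Real.sqrt (24 * n - 1))

/-- `S_x(λ)`. -/
noncomputable def Sfun (x lam : ℝ) : ℝ :=
  (1 + 1 / Real.sqrt (x + lam * x)) /
    ((1 - 1 / Real.sqrt x) * (1 - 1 / Real.sqrt (lam * x)))

/-- `T_x(λ)`. -/
noncomputable def Tfun (x lam : ℝ) : ℝ :=
  Real.pi / 6 * (Real.sqrt (24 * x - 1) + Real.sqrt (24 * lam * x - 1) -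
    Real.sqrt (24 * (x + lam * x) - 1))

lemma sqrt_sub_mono {A B : ℝ} (hA : 2 ≤ A) (hAB : A ≤ B) :
    Real.sqrt (24*A-1) - Real.sqrt (24*(A+A)-1) ≤
      Real.sqrt (24*B-1) - Real.sqrt (24*(A+B)-1) := by
  set p := Real.sqrt (24*A-1) with hp
  set q := Real.sqrt (24*B-1) with hq
  set r := Real.sqrt (24*(A+B)-1) with hr
  set s := Real.sqrt (24*(A+A)-1) with hs
  have hp2 : p^2 = 24*A-1 := Real.sq_sqrt (by linarith)
  have hq2 : q^2 = 24*B-1 := Real.sq_sqrt (by linarith)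
  have hr2 : r^2 = 24*(A+B)-1 := Real.sq_sqrt (by linarith)
  have hs2 : s^2 = 24*(A+A)-1 := Real.sq_sqrt (by linarith)
  have hp0 : 0 < p := Real.sqrt_pos.mpr (by linarith)
  have hs0 : 0 < s := Real.sqrt_pos.mpr (by linarith)
  have hpq : p ≤ q := Real.sqrt_le_sqrt (by linarith)
  have hsr : s ≤ r := Real.sqrt_le_sqrt (by linarith)
  have hps : p ≤ s := Real.sqrt_le_sqrt (by linarith)
  have hqr : q ≤ r := Real.sqrt_le_sqrt (by linarith)
  have hkey : (r - q) * (q + r) = (s - p) * (s + p) := by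
    have : (r - q) * (q + r) = r^2 - q^2 := by ring
    have h2 : (s - p) * (s + p) = s^2 - p^2 := by ring
    rw [this, h2, hr2, hq2, hs2, hp2]; ring
  have hsum : p + s ≤ q + r := by linarith
  have h3 : (r - q) * (p + s) ≤ (r - q) * (q + r) :=
    mul_le_mul_of_nonneg_left hsum (by linarith)
  nlinarith [h3, hkey, hp0, hs0]


set_option maxHeartbeats 1000000 in
lemma core (t c A B : ℝ) (ht : 1 ≤ t) (hc0 : 0 < c) (hc1 : c < 1)
    (hA : 2 ≤ A) (hAB : A ≤ B)
    (hT : Tfun A 1 > Real.log (4*A*Real.sqrt 3*t*(1+c)/(1-c)^2) + Real.log (Sfun A 1)) :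
    1/t*(1+c) * (Real.sqrt 3/(12*(A+B))*(1+1/Real.sqrt (A+B))) *
        Real.exp (Real.pi/6*Real.sqrt (24*(A+B)-1))
    < (1/t*(1-c) * (Real.sqrt 3/(12*A)*(1-1/Real.sqrt A)) *
        (1/t*(1-c) * (Real.sqrt 3/(12*B)*(1-1/Real.sqrt B))))
      * Real.exp (Real.pi/6*Real.sqrt (24*A-1) + Real.pi/6*Real.sqrt (24*B-1)) := by
  have h3 : (0:ℝ) < Real.sqrt 3 := Real.sqrt_pos.mpr (by norm_num)
  have h33 : Real.sqrt 3 * Real.sqrt 3 = 3 := Real.mul_self_sqrt (by norm_num)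
  have hA0 : (0:ℝ) < A := by linarith
  have hB0 : (0:ℝ) < B := by linarith
  have hAB0 : (0:ℝ) < A + B := by linarith
  have ht0 : (0:ℝ) < t := by linarith
  have hc1' : (0:ℝ) < 1 - c := by linarith
  have h1c : (0:ℝ) < 1 + c := by linarith
  have hsA : 0 < Real.sqrt A := Real.sqrt_pos.mpr hA0
  have hsB : 0 < Real.sqrt B := Real.sqrt_pos.mpr hB0
  have hsAB : 0 < Real.sqrt (A + B) := Real.sqrt_pos.mpr hAB0
  have hs2A : 0 < Real.sqrt (A + A) := Real.sqrt_pos.mpr (by linarith)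
  have hsA1 : 1 < Real.sqrt A := by
    have := Real.sqrt_lt_sqrt (by norm_num) (show (1:ℝ) < A by linarith)
    simpa using this
  have hsB1 : 1 < Real.sqrt B := by
    have := Real.sqrt_lt_sqrt (by norm_num) (show (1:ℝ) < B by linarith)
    simpa using this
  have e1 : Real.sqrt (A+A) ≤ Real.sqrt (A+B) := Real.sqrt_le_sqrt (by linarith)
  have e2 : Real.sqrt A ≤ Real.sqrt B := Real.sqrt_le_sqrt hAB
  have f1 : 1/Real.sqrt (A+B) ≤ 1/Real.sqrt (A+A) := one_div_le_one_div_of_le hs2A e1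
  have f2 : 1/Real.sqrt B ≤ 1/Real.sqrt A := one_div_le_one_div_of_le hsA e2
  have hS1 : Sfun A 1 = (1 + 1/Real.sqrt (A+A)) / ((1 - 1/Real.sqrt A) * (1 - 1/Real.sqrt A)) := by
    unfold Sfun; rw [one_mul]
  set s3 := Real.sqrt 3 with hs3
  set vA := 1 - 1/Real.sqrt A with hvAdef
  set vB := 1 - 1/Real.sqrt B with hvBdef
  set uAB := 1 + 1/Real.sqrt (A+B) with huABdef
  set u2A := 1 + 1/Real.sqrt (A+A) with hu2Adef
  have hvA : 0 < vA := by
    rw [hvAdef, sub_pos, div_lt_one hsA]; exact hsA1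
  have hvB : 0 < vB := by
    rw [hvBdef, sub_pos, div_lt_one hsB]; exact hsB1
  have huAB : 0 < uAB := by rw [huABdef]; positivity
  have hu2A : 0 < u2A := by rw [hu2Adef]; positivity
  have hvv : vA ≤ vB := by rw [hvAdef, hvBdef]; linarith
  have huu : uAB ≤ u2A := by rw [huABdef, hu2Adef]; linarith
  set CL := 1/t*(1-c) * (s3/(12*A)*vA) * (1/t*(1-c) * (s3/(12*B)*vB)) with hCL
  set CU := 1/t*(1+c) * (s3/(12*(A+B))*uAB) with hCU
  have hCL0 : 0 < CL := by
    rw [hCL]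
    have p1 : 0 < 1/t*(1-c) * (s3/(12*A)*vA) :=
      mul_pos (mul_pos (by positivity) hc1') (mul_pos (by positivity) hvA)
    have p2 : 0 < 1/t*(1-c) * (s3/(12*B)*vB) :=
      mul_pos (mul_pos (by positivity) hc1') (mul_pos (by positivity) hvB)
    exact mul_pos p1 p2
  have hCU0 : 0 < CU := by
    rw [hCU]
    exact mul_pos (mul_pos (by positivity) h1c) (mul_pos (by positivity) huAB)
  have hS0 : 0 < Sfun A 1 := by
    rw [hS1]; exact div_pos hu2A (mul_pos hvA hvA)
  have hW0 : (0:ℝ) < 4*A*s3*t*(1+c)/(1-c)^2 := by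
    apply div_pos _ (pow_pos hc1' 2)
    exact mul_pos (mul_pos (mul_pos (mul_pos (by norm_num) hA0) h3) ht0) h1c
  set Z := 4*A*s3*t*(1+c)/(1-c)^2 * Sfun A 1 with hZ
  have hZ0 : 0 < Z := mul_pos hW0 hS0
  have key : uAB * vA * B ≤ u2A * vB * (A+B) := by
    apply mul_le_mul _ (by linarith) hB0.le (mul_nonneg hu2A.le hvB.le)
    exact mul_le_mul huu hvv hvA.le hu2A.le
  have htne : t ≠ 0 := ht0.ne'
  have hcne : (1:ℝ) - c ≠ 0 := hc1'.ne'
  have hvAne : vA ≠ 0 := hvA.ne'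
  have e_CU : CU = s3/12 * (1/t*(1+c)) * (uAB/(A+B)) := by
    rw [hCU]; field_simp
  have e_ZCL : Z * CL = s3*(s3*s3)/36 * (1/t*(1+c)) * (u2A*vB/(vA*B)) := by
    rw [hZ, hCL, hS1]
    field_simp [htne, hcne, hvAne, hA0.ne', hB0.ne']
    ring
  have e_ZCL' : Z * CL = s3/12 * (1/t*(1+c)) * (u2A*vB/(vA*B)) := by
    rw [e_ZCL, hs3, h33]; ring
  have hfrac : uAB/(A+B) ≤ u2A*vB/(vA*B) := by
    rw [div_le_div_iff₀ hAB0 (mul_pos hvA hB0)]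
    calc uAB*(vA*B) = uAB*vA*B := by ring
      _ ≤ u2A*vB*(A+B) := key
  have hmain : CU ≤ Z * CL := by
    rw [e_CU, e_ZCL']
    exact mul_le_mul_of_nonneg_left hfrac (by positivity)
  have hDZ : CU / CL ≤ Z := (div_le_iff₀ hCL0).mpr hmain
  have hlogZ : Real.log (4*A*s3*t*(1+c)/(1-c)^2) + Real.log (Sfun A 1)
      = Real.log Z := (Real.log_mul hW0.ne' hS0.ne').symm
  have hT1 : Tfun A 1 = Real.pi/6 * (Real.sqrt (24*A-1) + Real.sqrt (24*A-1) -
      Real.sqrt (24*(A+A)-1)) := by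
    unfold Tfun; rw [mul_one, one_mul]
  have hTm : Tfun A 1 ≤ Real.pi/6 * (Real.sqrt (24*A-1) + Real.sqrt (24*B-1) -
      Real.sqrt (24*(A+B)-1)) := by
    rw [hT1]
    have hmono := sqrt_sub_mono hA hAB
    have hpi : (0:ℝ) ≤ Real.pi/6 := by positivity
    exact mul_le_mul_of_nonneg_left (by linarith) hpi
  have hlt : Real.log (CU/CL) < Real.pi/6 * (Real.sqrt (24*A-1) + Real.sqrt (24*B-1) -
      Real.sqrt (24*(A+B)-1)) := by
    calc Real.log (CU/CL) ≤ Real.log Z := Real.log_le_log (div_pos hCU0 hCL0) hDZ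
      _ = _ := hlogZ.symm
      _ < Tfun A 1 := hT
      _ ≤ _ := hTm
  have hexp : CU/CL < Real.exp (Real.pi/6*Real.sqrt (24*A-1) + Real.pi/6*Real.sqrt (24*B-1))
      / Real.exp (Real.pi/6*Real.sqrt (24*(A+B)-1)) := by
    rw [← Real.exp_sub]
    calc CU/CL = Real.exp (Real.log (CU/CL)) := (Real.exp_log (div_pos hCU0 hCL0)).symm
      _ < _ := by
          apply Real.exp_lt_exp.mpr
          calc Real.log (CU/CL) < _ := hlt
            _ = _ := by ring
  have hfin := (div_lt_div_iff₀ hCL0 (Real.exp_pos _)).mp hexp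
  calc CU * Real.exp (Real.pi/6*Real.sqrt (24*(A+B)-1))
      < Real.exp (Real.pi/6*Real.sqrt (24*A-1) + Real.pi/6*Real.sqrt (24*B-1)) * CL := hfin
    _ = CL * Real.exp (Real.pi/6*Real.sqrt (24*A-1) + Real.pi/6*Real.sqrt (24*B-1)) := by ring


lemma pLow_pos (n : ℕ) (hn : 2 ≤ n) : 0 < pLow n := by
  have h0 : (0:ℝ) < (n:ℝ) := by exact_mod_cast Nat.lt_of_lt_of_le (by norm_num) hn
  have hs : 0 < Real.sqrt (n:ℝ) := Real.sqrt_pos.mpr h0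
  have hs1 : 1 < Real.sqrt (n:ℝ) := by
    have h1 : (1:ℝ) < (n:ℝ) := by exact_mod_cast Nat.lt_of_lt_of_le (by norm_num) hn
    have := Real.sqrt_lt_sqrt (by norm_num) h1
    simpa using this
  have hv : 0 < 1 - 1/Real.sqrt (n:ℝ) := by
    rw [sub_pos, div_lt_one hs]; exact hs1
  unfold pLow
  have h3 : (0:ℝ) < Real.sqrt 3 := Real.sqrt_pos.mpr (by norm_num)
  exact mul_pos (mul_pos (by positivity) hv) (Real.exp_pos _)

lemma convexity_aux (t : ℤ) (ht : 1 ≤ t) (r : ℤ) (c : ℝ) (hc0 : 0 < c) (hc1 : c < 1)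
    (hbound : ∀ n : ℕ, 1 ≤ n →
      (1 / (t : ℝ)) * (1 - c) * pLow n < (rankCount r t n : ℝ) ∧
      (rankCount r t n : ℝ) < (1 / (t : ℝ)) * (1 + c) * pUp n)
    (x : ℕ) (hx : 2 ≤ x)
    (hT : ∀ a : ℕ, x ≤ a →
      Tfun a 1 >
        Real.log (4 * a * Real.sqrt 3 * t * (1 + c) / (1 - c) ^ 2) + Real.log (Sfun a 1))
    (a b : ℕ) (ha : x ≤ a) (hb : x ≤ b) (hab : a ≤ b) :
    (rankCount r t (a + b) : ℝ) < (rankCount r t a : ℝ) * (rankCount r t b : ℝ) := by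
  have ha2 : (2:ℝ) ≤ (a:ℝ) := by exact_mod_cast hx.trans ha
  have hab' : ((a:ℝ)) ≤ (b:ℝ) := by exact_mod_cast hab
  have ht' : (1:ℝ) ≤ ((t:ℤ):ℝ) := by exact_mod_cast ht
  have ht0 : (0:ℝ) < ((t:ℤ):ℝ) := by linarith
  have hc1' : (0:ℝ) < 1 - c := by linarith
  have hcore := core ((t:ℤ):ℝ) c (a:ℝ) (b:ℝ) ht' hc0 hc1 ha2 hab' (hT a ha)
  have h1 := (hbound a (by omega)).1
  have h2 := (hbound b (by omega)).1
  have h3 := (hbound (a+b) (by omega)).2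
  have hpa : 0 < (1/((t:ℤ):ℝ))*(1-c)*pLow a :=
    mul_pos (mul_pos (by positivity) hc1') (pLow_pos a (hx.trans ha))
  have hpb : 0 < (1/((t:ℤ):ℝ))*(1-c)*pLow b :=
    mul_pos (mul_pos (by positivity) hc1') (pLow_pos b (hx.trans hb))
  calc (rankCount r t (a+b) : ℝ) < (1/((t:ℤ):ℝ))*(1+c)*pUp (a+b) := h3
    _ = 1/((t:ℤ):ℝ)*(1+c) * (Real.sqrt 3/(12*((a:ℝ)+(b:ℝ)))*(1+1/Real.sqrt ((a:ℝ)+(b:ℝ)))) *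
        Real.exp (Real.pi/6*Real.sqrt (24*((a:ℝ)+(b:ℝ))-1)) := by
          simp only [pUp, Nat.cast_add]; ring
    _ < (1/((t:ℤ):ℝ)*(1-c) * (Real.sqrt 3/(12*(a:ℝ))*(1-1/Real.sqrt (a:ℝ))) *
        (1/((t:ℤ):ℝ)*(1-c) * (Real.sqrt 3/(12*(b:ℝ))*(1-1/Real.sqrt (b:ℝ)))))
        * Real.exp (Real.pi/6*Real.sqrt (24*(a:ℝ)-1) + Real.pi/6*Real.sqrt (24*(b:ℝ)-1)) := hcore
    _ = ((1/((t:ℤ):ℝ))*(1-c)*pLow a) * ((1/((t:ℤ):ℝ))*(1-c)*pLow b) := by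
          simp only [pLow]; rw [Real.exp_add]; ring
    _ ≤ (rankCount r t a : ℝ) * (rankCount r t b : ℝ) :=
          mul_le_mul h1.le h2.le hpb.le (Nat.cast_nonneg _)

/-- Abstract convexity lemma: if `(1/t)(1−c)p^L(n) < N(r,t;n) < (1/t)(1+c)p^U(n)` for all
`n ≥ 1`, and `x ≥ 2` is such that `T_a(1) > log(4a√3·t·(1+c)/(1−c)²) + log(S_a(1))` for all
`a ≥ x`, then `N(r,t;a)·N(r,t;b) > N(r,t;a+b)` for all `a, b ≥ x`. -/
theorem convexity_criterion (t : ℤ) (ht : 1 ≤ t) (r : ℤ) (c : ℝ) (hc0 : 0 < c) (hc1 : c < 1)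
    (hbound : ∀ n : ℕ, 1 ≤ n →
      (1 / (t : ℝ)) * (1 - c) * pLow n < (rankCount r t n : ℝ) ∧
      (rankCount r t n : ℝ) < (1 / (t : ℝ)) * (1 + c) * pUp n)
    (x : ℕ) (hx : 2 ≤ x)
    (hT : ∀ a : ℕ, x ≤ a →
      Tfun a 1 >
        Real.log (4 * a * Real.sqrt 3 * t * (1 + c) / (1 - c) ^ 2) + Real.log (Sfun a 1)) :
    ∀ a b : ℕ, x ≤ a → x ≤ b →
      rankCount r t a * rankCount r t b > rankCount r t (a + b) := by
  intro a b ha hb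
  rcases le_total a b with h | h
  · have := convexity_aux t ht r c hc0 hc1 hbound x hx hT a b ha hb h
    exact_mod_cast this
  · have := convexity_aux t ht r c hc0 hc1 hbound x hx hT b a hb ha h
    rw [Nat.add_comm a b, Nat.mul_comm]
    exact_mod_cast this
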